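/- Fix γ ∈ ℝ and let ψ_γ(x) = e^{-γ|x|}/(2π|x|). Then ψ_γ is (γ²/2)-excessive for the 3-dimensional Brownian semigroup R_t: e^{-γ²t/2} ∫_{ℝ³} r(t, x-y) ψ_γ(y) dy ≤ ψ_γ(x) for all t > 0 and x ∈ ℝ³ \ {0}, where r(t,z) = (2πt)^{-3/2} e^{-|z|²/(2t)}. -/

import Mathlib

open MeasureTheory Real Set

/-- 1D lintegral change of variables. -/
lemma my_lintegral_image {s : Set ℝ} {f f' : ℝ → ℝ} (hs : MeasurableSet s)
    (hf' : ∀ x ∈ s, HasDerivWithinAt f (f' x) s x) (hf : InjOn f s) (g : ℝ → ENNReal) :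
    ∫⁻ x in f '' s, g x = ∫⁻ x in s, ENNReal.ofReal |f' x| * g (f x) := by
  simpa only [ContinuousLinearMap.det_toSpanSingleton] using
    lintegral_image_eq_lintegral_abs_det_fderiv_mul volume hs
      (fun x hx => (hf' x hx).hasFDerivWithinAt) hf g

/-- lintegral polar coordinates. -/
lemma my_lintegral_polar (f : ℝ × ℝ → ENNReal) :
    (∫⁻ p in polarCoord.target, ENNReal.ofReal p.1 * f (polarCoord.symm p)) = ∫⁻ p, f p := by
  set B : ℝ × ℝ → ℝ × ℝ →L[ℝ] ℝ × ℝ := fun p =>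
    LinearMap.toContinuousLinearMap (Matrix.toLin (Module.Basis.finTwoProd ℝ) (Module.Basis.finTwoProd ℝ)
      !![cos p.2, -p.1 * sin p.2; sin p.2, p.1 * cos p.2])
  have A : ∀ p ∈ polarCoord.target, HasFDerivWithinAt polarCoord.symm (B p) polarCoord.target p :=
    fun p _ => (hasFDerivAt_polarCoord_symm p).hasFDerivWithinAt
  have B_det : ∀ p, (B p).det = p.1 := by
    intro p
    conv_rhs => rw [← one_mul p.1, ← cos_sq_add_sin_sq p.2]
    simp only [B, neg_mul, LinearMap.det_toContinuousLinearMap, LinearMap.det_toLin,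
      Matrix.det_fin_two_of, sub_neg_eq_add]
    ring
  symm
  calc
    ∫⁻ p, f p = ∫⁻ p in polarCoord.source, f p := by
      rw [← setLIntegral_univ]
      exact (setLIntegral_congr polarCoord_source_ae_eq_univ.symm)
    _ = ∫⁻ p in polarCoord.symm '' polarCoord.target, f p := by
      rw [polarCoord.symm_image_target_eq_source]
    _ = ∫⁻ p in polarCoord.target, ENNReal.ofReal |(B p).det| * f (polarCoord.symm p) := by
      apply lintegral_image_eq_lintegral_abs_det_fderiv_mul volume
        polarCoord.open_target.measurableSet A
      intro p hp q hq h
      have := polarCoord.symm.injOn (by simpa using hp) (by simpa using hq) h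
      exact this
    _ = ∫⁻ p in polarCoord.target, ENNReal.ofReal p.1 * f (polarCoord.symm p) := by
      apply setLIntegral_congr_fun polarCoord.open_target.measurableSet
      intro p hp
      dsimp only
      rw [B_det, abs_of_pos hp.1]

lemma my_lintegral_exp_neg : ∫⁻ y in Ioi (0:ℝ), ENNReal.ofReal (exp (-y)) = 1 := by
  rw [← ofReal_integral_eq_lintegral_ofReal]
  · rw [integral_exp_neg_Ioi, neg_zero, exp_zero, ENNReal.ofReal_one]
  · exact (by simpa using exp_neg_integrableOn_Ioi 0 (one_pos) : IntegrableOn (fun x : ℝ => rexp (-x)) (Ioi 0))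
  · filter_upwards with y using (exp_pos _).le

lemma my_lintegral_exp_Iio (c u : ℝ) (hc : 0 < c) :
    ∫⁻ y in Iio u, ENNReal.ofReal (exp (c * y)) = ENNReal.ofReal (exp (c * u) / c) := by
  have himg : (fun y : ℝ => u - y / c) '' Ioi 0 = Iio u := by
    ext z
    constructor
    · rintro ⟨y, hy, rfl⟩
      have : 0 < y / c := div_pos hy hc
      simp only [mem_Iio]; linarith
    · intro hz
      exact ⟨c * (u - z), mul_pos hc (sub_pos.mpr hz), by field_simp; ring⟩
  have hderiv : ∀ y ∈ Ioi (0:ℝ), HasDerivWithinAt (fun y : ℝ => u - y / c) (-(1/c)) (Ioi 0) y := by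
    intro y _
    simpa using (((hasDerivAt_id y).div_const c).const_sub u).hasDerivWithinAt
  have hinj : InjOn (fun y : ℝ => u - y / c) (Ioi 0) := by
    intro a _ b _ h
    simp only at h
    have h2 : a / c = b / c := by linarith
    field_simp at h2
    exact h2
  rw [← himg, my_lintegral_image measurableSet_Ioi hderiv hinj]
  have : ∀ y ∈ Ioi (0:ℝ), ENNReal.ofReal |(-(1/c))| * ENNReal.ofReal (exp (c * (u - y / c)))
      = ENNReal.ofReal (exp (c * u) / c) * ENNReal.ofReal (exp (-y)) := by
    intro y _
    rw [← ENNReal.ofReal_mul (abs_nonneg _), ← ENNReal.ofReal_mul (by positivity)]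
    congr 1
    rw [abs_neg, abs_of_pos (by positivity : (0:ℝ) < 1/c), mul_sub,
      mul_div_cancel₀ _ hc.ne', exp_sub, exp_neg]
    field_simp
  rw [setLIntegral_congr_fun measurableSet_Ioi this,
    lintegral_const_mul' _ _ ENNReal.ofReal_ne_top, my_lintegral_exp_neg, mul_one]

lemma my_lintegral_gauss (t a γ : ℝ) (ht : 0 < t) :
    ∫⁻ u : ℝ, ENNReal.ofReal (exp (-(u - a)^2 / (2*t) - γ*u))
      = ENNReal.ofReal (Real.sqrt (2*π*t) * exp (γ^2*t/2 - γ*a)) := by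
  have key : ∀ u : ℝ, exp (-(u - a)^2 / (2*t) - γ*u)
      = exp (γ^2*t/2 - γ*a) * exp (-(1/(2*t)) * (u - (a - γ*t))^2) := by
    intro u
    rw [← exp_add]
    congr 1
    field_simp
    ring
  simp_rw [key]
  have hb : (0:ℝ) < 1/(2*t) := by positivity
  have hint : Integrable (fun u : ℝ => exp (γ^2*t/2 - γ*a) * exp (-(1/(2*t)) * (u - (a - γ*t))^2)) := by
    exact ((integrable_exp_neg_mul_sq hb).comp_sub_right (a - γ*t)).const_mul _
  rw [← ofReal_integral_eq_lintegral_ofReal hint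
    (Filter.Eventually.of_forall fun u => by positivity)]
  congr 1
  rw [integral_const_mul]
  have : ∫ u : ℝ, exp (-(1/(2*t)) * (u - (a - γ*t))^2) = ∫ u : ℝ, exp (-(1/(2*t)) * u^2) :=
    integral_sub_right_eq_self (fun u => exp (-(1/(2*t)) * u^2)) (a - γ*t)
  rw [this, integral_gaussian]
  have : π / (1/(2*t)) = 2*π*t := by field_simp
  rw [this, mul_comm]

lemma my_sqrt_image (b : ℝ) : (fun r : ℝ => Real.sqrt (b^2 + r^2)) '' Ioi 0 = Ioi |b| := by
  ext v
  constructor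
  · rintro ⟨r, hr, rfl⟩
    have h1 : b^2 < b^2 + r^2 := by nlinarith [mem_Ioi.mp hr]
    have := Real.sqrt_lt_sqrt (sq_nonneg b) h1
    rwa [Real.sqrt_sq_eq_abs] at this
  · intro hv
    have hv' : |b| < v := hv
    have hv0 : 0 < v := lt_of_le_of_lt (abs_nonneg b) hv'
    have hb2 : b^2 < v^2 := by
      have := sq_abs b
      nlinarith [abs_nonneg b]
    refine ⟨Real.sqrt (v^2 - b^2), ?_, ?_⟩
    · exact Real.sqrt_pos.mpr (by linarith)
    · show Real.sqrt (b^2 + Real.sqrt (v^2 - b^2) ^ 2) = v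
      rw [Real.sq_sqrt (by linarith : (0:ℝ) ≤ v^2 - b^2), add_sub_cancel, Real.sqrt_sq hv0.le]

lemma my_sqrt_deriv (b : ℝ) {r : ℝ} (hr : r ∈ Ioi (0:ℝ)) :
    HasDerivWithinAt (fun r : ℝ => Real.sqrt (b^2 + r^2))
      (r / Real.sqrt (b^2 + r^2)) (Ioi 0) r := by
  have hpos : 0 < b^2 + r^2 := by nlinarith [mem_Ioi.mp hr]
  have h1 : HasDerivAt (fun r : ℝ => b^2 + r^2) (2*r) r := by
    simpa using ((hasDerivAt_pow 2 r).const_add (b^2))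
  have h2 := (Real.hasDerivAt_sqrt hpos.ne').comp r h1
  have : 1 / (2 * Real.sqrt (b^2 + r^2)) * (2*r) = r / Real.sqrt (b^2 + r^2) := by
    have hs : Real.sqrt (b^2 + r^2) ≠ 0 := (Real.sqrt_pos.mpr hpos).ne'
    field_simp
  rw [this] at h2
  exact h2.hasDerivWithinAt

lemma my_sqrt_inj (b : ℝ) : InjOn (fun r : ℝ => Real.sqrt (b^2 + r^2)) (Ioi 0) := by
  have : StrictMonoOn (fun r : ℝ => Real.sqrt (b^2 + r^2)) (Ioi 0) := by
    intro p hp q hq hpq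
    apply Real.sqrt_lt_sqrt (by positivity)
    nlinarith [mem_Ioi.mp hp]
  exact this.injOn

lemma my_sqrt_subst (b : ℝ) (g : ℝ → ENNReal) :
    ∫⁻ u in Ioi |b|, g u
      = ∫⁻ r in Ioi 0, ENNReal.ofReal |r / Real.sqrt (b^2 + r^2)| * g (Real.sqrt (b^2 + r^2)) := by
  rw [← my_sqrt_image b,
    my_lintegral_image measurableSet_Ioi (fun r hr => my_sqrt_deriv b hr) (my_sqrt_inj b)]

lemma my_volume_Ioo_pi : (volume (Ioo (-π) π) : ENNReal) = ENNReal.ofReal (2*π) := by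
  rw [Real.volume_Ioo]
  congr 1
  ring

lemma my_inner2 (c t a γ b : ℝ) (ht : 0 < t) (hc : 0 ≤ c) :
    (∫⁻ q : ℝ × ℝ, ENNReal.ofReal (c * exp (-((b-a)^2 + (q.1^2 + q.2^2)) / (2*t)) *
        (exp (-γ * Real.sqrt (b^2 + (q.1^2 + q.2^2))) /
          (2*π*Real.sqrt (b^2 + (q.1^2 + q.2^2))))))
      = ENNReal.ofReal (2*π) * ∫⁻ u in Ioi |b|,
          ENNReal.ofReal (c/(2*π) * exp (-(b-a)^2/(2*t)) * exp ((b^2-u^2)/(2*t)) * exp (-γ*u)) := by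
  set g : ℝ → ENNReal := fun u =>
    ENNReal.ofReal (c/(2*π) * exp (-(b-a)^2/(2*t)) * exp ((b^2-u^2)/(2*t)) * exp (-γ*u)) with hg
  set φ : ℝ → ENNReal := fun r =>
    ENNReal.ofReal |r / Real.sqrt (b^2 + r^2)| * g (Real.sqrt (b^2 + r^2)) with hφ
  rw [my_sqrt_subst b g, ← my_lintegral_polar]
  have key : ∀ p ∈ polarCoord.target,
      ENNReal.ofReal p.1 * ENNReal.ofReal (c * exp (-((b-a)^2 +
          ((polarCoord.symm p).1^2 + (polarCoord.symm p).2^2)) / (2*t)) *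
        (exp (-γ * Real.sqrt (b^2 + ((polarCoord.symm p).1^2 + (polarCoord.symm p).2^2))) /
          (2*π*Real.sqrt (b^2 + ((polarCoord.symm p).1^2 + (polarCoord.symm p).2^2)))))
      = φ p.1 := by
    rintro ⟨r, θ⟩ hp
    have hr : 0 < r := hp.1
    have hsq : (polarCoord.symm (r, θ)).1^2 + (polarCoord.symm (r, θ)).2^2 = r^2 := by
      show (r * cos θ)^2 + (r * sin θ)^2 = r^2
      have := sin_sq_add_cos_sq θ
      nlinarith
    rw [hsq]
    have hu : 0 < Real.sqrt (b^2 + r^2) := Real.sqrt_pos.mpr (by positivity)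
    have hu2 : Real.sqrt (b^2 + r^2) ^ 2 = b^2 + r^2 := Real.sq_sqrt (by positivity)
    simp only [hφ, hg]
    rw [← ENNReal.ofReal_mul hr.le, ← ENNReal.ofReal_mul (abs_nonneg _)]
    congr 1
    rw [abs_of_pos (div_pos hr hu)]
    have h1 : exp ((b^2 - Real.sqrt (b^2+r^2)^2)/(2*t)) = exp (-r^2/(2*t)) := by
      rw [hu2]; congr 1; ring
    have hE : rexp (-((b - a) ^ 2 + r ^ 2) / (2 * t))
        = rexp (-(b - a) ^ 2 / (2 * t)) * rexp (-r ^ 2 / (2 * t)) := by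
      rw [← Real.exp_add]; congr 1; ring
    rw [h1, hE]
    field_simp
  rw [setLIntegral_congr_fun polarCoord.open_target.measurableSet
    key]
  have hs : Measurable fun r : ℝ => Real.sqrt (b^2 + r^2) :=
    (continuous_const.add (continuous_pow 2)).sqrt.measurable
  have hφm : Measurable φ := by
    simp only [hφ, hg]
    apply Measurable.fun_mul
    · exact (measurable_id.div hs).abs.ennreal_ofReal
    · apply Measurable.ennreal_ofReal
      exact (measurable_const.mul
        (Real.measurable_exp.comp ((measurable_const.sub (hs.pow_const 2)).div_const _))).mul
        (Real.measurable_exp.comp (hs.const_mul (-γ)))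
  have htar : polarCoord.target = Ioi (0:ℝ) ×ˢ Ioo (-π) π := rfl
  rw [htar]
  rw [Measure.volume_eq_prod, ← Measure.prod_restrict,
    lintegral_prod (fun z => φ z.1) ((hφm.comp measurable_fst).aemeasurable)]
  simp only [lintegral_const, Measure.restrict_apply_univ]
  rw [lintegral_mul_const' _ _ (by rw [Real.volume_Ioo]; exact ENNReal.ofReal_ne_top),
    my_volume_Ioo_pi, mul_comm]

lemma my_reduce (G : ℝ → ℝ → ENNReal) (hG : Measurable (fun p : ℝ × ℝ => G p.1 p.2)) :
    ∫⁻ y : EuclideanSpace ℝ (Fin 3), G (y 0) ((y 1)^2 + (y 2)^2)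
      = ∫⁻ p : ℝ × ℝ × ℝ, G p.1 (p.2.1^2 + p.2.2^2) := by
  have hGm : ∀ {α : Type} [MeasurableSpace α] {u v : α → ℝ},
      Measurable u → Measurable v → Measurable (fun z => G (u z) (v z)) := by
    intro α _ u v hu hv
    exact hG.comp (hu.prodMk hv)
  have step1 : ∫⁻ y : EuclideanSpace ℝ (Fin 3), G (y 0) ((y 1)^2 + (y 2)^2)
      = ∫⁻ v : Fin 3 → ℝ, G (v 0) ((v 1)^2 + (v 2)^2) := by
    rw [← ((EuclideanSpace.volume_preserving_symm_measurableEquiv_toLp (Fin 3)).symm).lintegral_comp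
      (hGm (u := fun y : EuclideanSpace ℝ (Fin 3) => y 0)
        (v := fun y : EuclideanSpace ℝ (Fin 3) => (y 1)^2 + (y 2)^2) (by fun_prop) (by fun_prop))]
    rfl
  have step2 : ∫⁻ v : Fin 3 → ℝ, G (v 0) ((v 1)^2 + (v 2)^2)
      = ∫⁻ p : ℝ × (Fin 2 → ℝ), G p.1 ((p.2 0)^2 + (p.2 1)^2) := by
    rw [← ((volume_preserving_piFinSuccAbove (fun _ : Fin 3 => ℝ) 0).symm).lintegral_comp
      (hGm (u := fun v : Fin 3 → ℝ => v 0) (v := fun v : Fin 3 → ℝ => (v 1)^2 + (v 2)^2)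
        (by fun_prop) (by fun_prop))]
    apply lintegral_congr
    intro p
    obtain ⟨z, w⟩ := p
    have h2 : (2 : Fin 3) = Fin.succ 1 := rfl
    simp only [MeasurableEquiv.piFinSuccAbove_symm_apply, Fin.insertNthEquiv_apply,
      Fin.insertNth_zero', Fin.cons_zero, Fin.cons_one, h2, Fin.cons_succ]
  have step3 : ∫⁻ p : ℝ × (Fin 2 → ℝ), G p.1 ((p.2 0)^2 + (p.2 1)^2)
      = ∫⁻ p : ℝ × ℝ × ℝ, G p.1 (p.2.1^2 + p.2.2^2) := by
    have hmp : MeasurePreserving (fun p : ℝ × ℝ × ℝ =>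
        (p.1, MeasurableEquiv.finTwoArrow.symm p.2)) volume volume := by
      have h := (MeasurePreserving.id (volume : Measure ℝ)).prod
        ((volume_preserving_finTwoArrow ℝ).symm MeasurableEquiv.finTwoArrow)
      rwa [← Measure.volume_eq_prod, ← Measure.volume_eq_prod] at h
    rw [← hmp.lintegral_comp
      (f := fun p : ℝ × (Fin 2 → ℝ) => G p.1 ((p.2 0)^2 + (p.2 1)^2))
      (hGm measurable_fst
        ((((measurable_pi_apply 0).comp measurable_snd).pow_const 2).add
          (((measurable_pi_apply 1).comp measurable_snd).pow_const 2)))]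
    apply lintegral_congr
    intro p
    simp [MeasurableEquiv.finTwoArrow_symm_apply]
  rw [step1, step2, step3]

noncomputable def psi (γ : ℝ) (x : EuclideanSpace ℝ (Fin 3)) : ℝ :=
  Real.exp (-γ * ‖x‖) / (2 * Real.pi * ‖x‖)

theorem stmt19 (γ t : ℝ) (ht : 0 < t) (x : EuclideanSpace ℝ (Fin 3)) (hx : x ≠ 0) :
    Real.exp (-γ ^ 2 * t / 2) *
        ∫ y, (2 * Real.pi * t) ^ (-(3 : ℝ) / 2) * Real.exp (-‖x - y‖ ^ 2 / (2 * t)) * psi γ y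
      ≤ psi γ x := by
  set a := ‖x‖ with ha_def
  have ha : 0 < a := norm_pos_iff.mpr hx
  set c := (2 * Real.pi * t) ^ (-(3 : ℝ) / 2) with hc_def
  have hc : 0 < c := rpow_pos_of_pos (by positivity) _
  -- the integrand
  set f : EuclideanSpace ℝ (Fin 3) → ℝ :=
    fun y => c * Real.exp (-‖x - y‖ ^ 2 / (2 * t)) * psi γ y with hf_def
  have hψnn : ∀ y, 0 ≤ psi γ y := fun y => div_nonneg (exp_pos _).le (by positivity)
  have hfnn : ∀ y, 0 ≤ f y := fun y => by
    have := hψnn y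
    positivity
  have hnorm_meas : Measurable fun y : EuclideanSpace ℝ (Fin 3) => ‖y‖ := continuous_norm.measurable
  have hψm : Measurable (psi γ) := by
    unfold psi
    exact ((hnorm_meas.const_mul (-γ)).exp).div (hnorm_meas.const_mul (2*π))
  have hxy : Measurable fun y : EuclideanSpace ℝ (Fin 3) => ‖x - y‖ :=
    (continuous_const.sub continuous_id).norm.measurable
  have hfm : Measurable f := by
    apply Measurable.mul
    · exact measurable_const.mul (((hxy.pow_const 2).neg.div_const _).exp)
    · exact hψm
  rw [show (∫ y, (2 * Real.pi * t) ^ (-(3 : ℝ) / 2) *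
      Real.exp (-‖x - y‖ ^ 2 / (2 * t)) * psi γ y) = ∫ y, f y from rfl,
    integral_eq_lintegral_of_nonneg_ae (Filter.Eventually.of_forall hfnn)
      hfm.aestronglyMeasurable]
  suffices hmain : ∫⁻ y, ENNReal.ofReal (f y) ≤ ENNReal.ofReal (exp (γ^2*t/2) * psi γ x) by
    have h2 : (∫⁻ y, ENNReal.ofReal (f y)).toReal ≤ exp (γ^2*t/2) * psi γ x := by
      have h3 := ENNReal.toReal_mono (ENNReal.ofReal_ne_top) hmain
      rwa [ENNReal.toReal_ofReal (by
        have := hψnn x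
        positivity)] at h3
    calc Real.exp (-γ ^ 2 * t / 2) * (∫⁻ y, ENNReal.ofReal (f y)).toReal
        ≤ Real.exp (-γ ^ 2 * t / 2) * (exp (γ^2*t/2) * psi γ x) :=
          mul_le_mul_of_nonneg_left h2 (exp_pos _).le
      _ = psi γ x := by
          rw [← mul_assoc, ← Real.exp_add, show -γ ^ 2 * t / 2 + γ^2*t/2 = 0 by ring,
            Real.exp_zero, one_mul]
  -- rotation
  set u0 : EuclideanSpace ℝ (Fin 3) := a • (EuclideanSpace.single (0 : Fin 3) (1:ℝ)) with hu0_def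
  have hu0 : ‖u0‖ = a := by
    rw [hu0_def, norm_smul, EuclideanSpace.norm_single]
    simp [abs_of_pos ha]
  set L := Submodule.reflection (Submodule.span ℝ {u0 - x})ᗮ with hL_def
  have hLx : L u0 = x := Submodule.reflection_sub (by rw [hu0])
  have hrot : ∫⁻ y, ENNReal.ofReal (f y) = ∫⁻ y, ENNReal.ofReal (f (L y)) :=
    (L.measurePreserving.lintegral_comp hfm.ennreal_ofReal).symm
  -- the rotated integrand as a function of (y 0, (y 1)^2 + (y 2)^2)
  set G : ℝ → ℝ → ENNReal := fun b s =>
    ENNReal.ofReal (c * exp (-((b - a)^2 + s) / (2*t)) *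
      (exp (-γ * Real.sqrt (b^2 + s)) / (2*π*Real.sqrt (b^2 + s)))) with hG_def
  have hGm : Measurable (fun p : ℝ × ℝ => G p.1 p.2) := by
    have hsq : Measurable fun p : ℝ × ℝ => Real.sqrt (p.1^2 + p.2) :=
      ((continuous_fst.pow 2).add continuous_snd).sqrt.measurable
    apply Measurable.ennreal_ofReal
    apply Measurable.mul
    · exact measurable_const.mul
        ((((((measurable_fst.sub_const a).pow_const 2).add measurable_snd).neg).div_const _).exp)
    · exact ((hsq.const_mul (-γ)).exp).div (hsq.const_mul (2*π))
  have hu00 : u0 0 = a := by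
    rw [hu0_def]; simp [EuclideanSpace.single_apply]
  have hu01 : u0 1 = 0 := by
    rw [hu0_def]; simp [EuclideanSpace.single_apply]
  have hu02 : u0 2 = 0 := by
    rw [hu0_def]; simp [EuclideanSpace.single_apply]
  have hEq : ∀ y : EuclideanSpace ℝ (Fin 3),
      ENNReal.ofReal (f (L y)) = G (y 0) ((y 1)^2 + (y 2)^2) := by
    intro y
    have hnx : ‖x - L y‖ = ‖u0 - y‖ := by
      rw [← hLx, ← map_sub, L.norm_map]
    have hny : ‖L y‖ = ‖y‖ := L.norm_map y
    have hu0y : ‖u0 - y‖^2 = ((y 0) - a)^2 + ((y 1)^2 + (y 2)^2) := by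
      rw [EuclideanSpace.norm_eq, Real.sq_sqrt (by positivity), Fin.sum_univ_three]
      simp only [PiLp.sub_apply, Real.norm_eq_abs, sq_abs]
      rw [hu00, hu01, hu02]
      ring
    have hyn : ‖y‖ = Real.sqrt ((y 0)^2 + ((y 1)^2 + (y 2)^2)) := by
      rw [EuclideanSpace.norm_eq, Fin.sum_univ_three]
      simp only [Real.norm_eq_abs, sq_abs]
      congr 1
      ring
    have hfL : f (L y) = c * exp (-(((y 0) - a)^2 + ((y 1)^2 + (y 2)^2)) / (2*t)) *
        (exp (-γ * Real.sqrt ((y 0)^2 + ((y 1)^2 + (y 2)^2))) /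
          (2*π*Real.sqrt ((y 0)^2 + ((y 1)^2 + (y 2)^2)))) := by
      rw [hf_def]
      simp only
      unfold psi
      rw [hnx, hny, hu0y, hyn]
    rw [hfL, hG_def]
  set P : ℝ → ℝ → ENNReal :=
    fun b u => ENNReal.ofReal (exp ((2*a*b - a^2 - u^2)/(2*t) - γ*u)) with hP_def
  have hPm : Measurable (fun z : ℝ × ℝ => P z.1 z.2) := by
    apply Measurable.ennreal_ofReal
    apply Measurable.exp
    exact ((((measurable_fst.const_mul (2*a)).sub_const (a^2)).sub
      (measurable_snd.pow_const 2)).div_const _).sub (measurable_snd.const_mul γ)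
  have hπ : (0:ℝ) < π := pi_pos
  have step_chain : ∫⁻ y, ENNReal.ofReal (f y)
      ≤ ENNReal.ofReal c * ∫⁻ u : ℝ, ∫⁻ b in Iio u, P b u := by
    calc ∫⁻ y, ENNReal.ofReal (f y)
        = ∫⁻ p : ℝ × ℝ × ℝ, G p.1 (p.2.1^2 + p.2.2^2) := by
          rw [hrot, lintegral_congr hEq, my_reduce G hGm]
      _ = ∫⁻ b : ℝ, ∫⁻ q : ℝ × ℝ, G b (q.1^2 + q.2^2) := by
          rw [Measure.volume_eq_prod,
            lintegral_prod (fun p : ℝ × ℝ × ℝ => G p.1 (p.2.1^2 + p.2.2^2))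
              (hGm.comp (measurable_fst.prodMk
                (by fun_prop : Measurable fun p : ℝ × ℝ × ℝ => p.2.1^2 + p.2.2^2))).aemeasurable]
      _ = ∫⁻ b : ℝ, ENNReal.ofReal (2*π) * ∫⁻ u in Ioi |b|,
            ENNReal.ofReal (c/(2*π) * exp (-(b-a)^2/(2*t)) * exp ((b^2-u^2)/(2*t)) *
              exp (-γ*u)) := by
          apply lintegral_congr
          intro b
          exact my_inner2 c t a γ b ht hc.le
      _ = ENNReal.ofReal c * ∫⁻ b : ℝ, ∫⁻ u in Ioi |b|, P b u := by
          have hm1 : ∀ b u : ℝ, c/(2*π) * exp (-(b-a)^2/(2*t)) * exp ((b^2-u^2)/(2*t)) *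
              exp (-γ*u) = c/(2*π) * exp ((2*a*b - a^2 - u^2)/(2*t) - γ*u) := by
            intro b u
            rw [mul_assoc, mul_assoc, ← Real.exp_add, ← Real.exp_add]
            congr 1
            ring
          have h2 : ∀ b : ℝ, (∫⁻ u in Ioi |b|, ENNReal.ofReal (c/(2*π) *
              exp (-(b-a)^2/(2*t)) * exp ((b^2-u^2)/(2*t)) * exp (-γ*u)))
              = ENNReal.ofReal (c/(2*π)) * ∫⁻ u in Ioi |b|, P b u := by
            intro b
            simp_rw [hm1 b]
            rw [← lintegral_const_mul' _ _ ENNReal.ofReal_ne_top]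
            apply lintegral_congr
            intro u
            rw [← ENNReal.ofReal_mul (by positivity)]
          simp_rw [h2]
          have h3 : ENNReal.ofReal (2*π) * ENNReal.ofReal (c/(2*π)) = ENNReal.ofReal c := by
            rw [← ENNReal.ofReal_mul (by positivity)]
            congr 1
            field_simp
          simp_rw [← mul_assoc, h3]
          rw [← lintegral_const_mul' _ _ ENNReal.ofReal_ne_top]
      _ ≤ ENNReal.ofReal c * ∫⁻ b : ℝ, ∫⁻ u in Ioi b, P b u := by
          apply mul_le_mul_right
          apply lintegral_mono
          intro b
          exact lintegral_mono_set (Ioi_subset_Ioi (le_abs_self b))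
      _ = ENNReal.ofReal c * ∫⁻ u : ℝ, ∫⁻ b in Iio u, P b u := by
          congr 1
          have h1 : ∀ b : ℝ, ∫⁻ u in Ioi b, P b u = ∫⁻ u, if b < u then P b u else 0 := by
            intro b
            rw [← lintegral_indicator measurableSet_Ioi]
            apply lintegral_congr
            intro u
            simp [Set.indicator_apply, mem_Ioi]
          have h2 : ∀ u : ℝ, ∫⁻ b in Iio u, P b u = ∫⁻ b, if b < u then P b u else 0 := by
            intro u
            rw [← lintegral_indicator measurableSet_Iio]
            apply lintegral_congr
            intro b
            simp [Set.indicator_apply, mem_Iio]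
          simp_rw [h1, h2]
          exact lintegral_lintegral_swap
            ((Measurable.ite (measurableSet_lt measurable_fst measurable_snd) hPm
              measurable_const).aemeasurable)
  have inner_eval : ∀ u : ℝ, ∫⁻ b in Iio u, P b u
      = ENNReal.ofReal ((t/a) * exp (-(u-a)^2/(2*t) - γ*u)) := by
    intro u
    have hsplit : ∀ b : ℝ, P b u
        = ENNReal.ofReal (exp ((-a^2 - u^2)/(2*t) - γ*u)) * ENNReal.ofReal (exp ((a/t) * b)) := by
      intro b
      rw [hP_def]
      simp only
      rw [← ENNReal.ofReal_mul (exp_pos _).le, ← Real.exp_add]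
      congr 1
      field_simp
      ring
    simp_rw [hsplit]
    rw [lintegral_const_mul' _ _ ENNReal.ofReal_ne_top,
      my_lintegral_exp_Iio (a/t) u (div_pos ha ht),
      ← ENNReal.ofReal_mul (exp_pos _).le]
    congr 1
    have hCC : exp (-(u-a)^2/(2*t) - γ*u)
        = exp ((-a^2 - u^2)/(2*t) - γ*u) * exp ((a/t)*u) := by
      rw [← Real.exp_add]
      congr 1
      field_simp
      ring
    rw [hCC]
    field_simp
  have outer_eval : ∫⁻ u : ℝ, ENNReal.ofReal ((t/a) * exp (-(u-a)^2/(2*t) - γ*u))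
      = ENNReal.ofReal (t/a) * ENNReal.ofReal (Real.sqrt (2*π*t) * exp (γ^2*t/2 - γ*a)) := by
    simp_rw [ENNReal.ofReal_mul (by positivity : (0:ℝ) ≤ t/a)]
    rw [lintegral_const_mul' _ _ ENNReal.ofReal_ne_top, my_lintegral_gauss t a γ ht]
  have hkey : c * t * Real.sqrt (2*π*t) = 1/(2*π) := by
    have h2πt : (0:ℝ) < 2*π*t := by positivity
    have h1 : c * Real.sqrt (2*π*t) = (2*π*t)⁻¹ := by
      rw [hc_def, Real.sqrt_eq_rpow, ← Real.rpow_add h2πt,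
        show (-(3:ℝ)/2 + 1/2) = (-1 : ℝ) by norm_num, Real.rpow_neg_one]
    calc c * t * Real.sqrt (2*π*t) = c * Real.sqrt (2*π*t) * t := by ring
      _ = (2*π*t)⁻¹ * t := by rw [h1]
      _ = 1/(2*π) := by field_simp
  calc ∫⁻ y, ENNReal.ofReal (f y) ≤ ENNReal.ofReal c * ∫⁻ u : ℝ, ∫⁻ b in Iio u, P b u :=
        step_chain
    _ = ENNReal.ofReal c * (ENNReal.ofReal (t/a) *
          ENNReal.ofReal (Real.sqrt (2*π*t) * exp (γ^2*t/2 - γ*a))) := by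
        rw [lintegral_congr inner_eval, outer_eval]
    _ = ENNReal.ofReal (exp (γ^2*t/2) * psi γ x) := by
        rw [← ENNReal.ofReal_mul (by positivity), ← ENNReal.ofReal_mul hc.le]
        congr 1
        unfold psi
        rw [show γ^2*t/2 - γ*a = γ^2*t/2 + (-γ*a) by ring, Real.exp_add]
        calc c * (t/a * (Real.sqrt (2*π*t) * (exp (γ^2*t/2) * exp (-γ*a))))
            = (c * t * Real.sqrt (2*π*t)) * (exp (γ^2*t/2) * exp (-γ*a)) / a := by ring
          _ = (1/(2*π)) * (exp (γ^2*t/2) * exp (-γ*a)) / a := by rw [hkey]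
          _ = exp (γ^2*t/2) * (exp (-γ*‖x‖) / (2*π*‖x‖)) := by
              rw [← ha_def]
              field_simp
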